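/- arXiv:2412.06316 — 2 statements merged into one kernel-verified Lean document; each statement's English description precedes it below -/
import Mathlib

section
/- Let G be a graph of tree-width k ≥ 3 and let v be a vertex of degree at most 2 in G. Then the graph G' obtained from G by contracting v to one of its neighbours also has tree-width k. -/
open SimpleGraph

section Helpers

variable {A W : Type}

lemma reachable_induce_map {G : SimpleGraph A} {H : SimpleGraph W} (f : G →g H)
    {s : Set A} {s' : Set W} (hs : ∀ i ∈ s, f i ∈ s') {a b : A} (ha : a ∈ s) (hb : b ∈ s)
    (h : (G.induce s).Reachable ⟨a, ha⟩ ⟨b, hb⟩) :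
    (H.induce s').Reachable ⟨f a, hs a ha⟩ ⟨f b, hs b hb⟩ := by
  let g : G.induce s →g H.induce s' :=
    ⟨fun x => ⟨f x.1, hs x.1 x.2⟩, fun hxy => f.map_adj hxy⟩
  exact h.map g

lemma ncard_subtype_le [Fintype A] (v : A) (B : Set A) :
    {u : {u : A // u ≠ v} | ↑u ∈ B}.ncard ≤ B.ncard := by
  have h1 : Subtype.val '' {u : {u : A // u ≠ v} | ↑u ∈ B} ⊆ B := by
    rintro x ⟨w, hw, rfl⟩; exact hw
  calc {u : {u : A // u ≠ v} | ↑u ∈ B}.ncard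
      = (Subtype.val '' {u : {u : A // u ≠ v} | ↑u ∈ B}).ncard :=
        (Set.ncard_image_of_injective _ Subtype.val_injective).symm
    _ ≤ B.ncard := Set.ncard_le_ncard h1 B.toFinite

lemma ncard_three_le [Fintype A] {a b c : A} {s : Set A} (hab : a ≠ b) (hac : a ≠ c)
    (hbc : b ≠ c) (ha : a ∈ s) (hb : b ∈ s) (hc : c ∈ s) : 3 ≤ s.ncard := by
  have h3 : ({a, b, c} : Set A).ncard = 3 := by
    rw [Set.ncard_insert_of_notMem (by simp [hab, hac]) (Set.toFinite _),
      Set.ncard_pair hbc]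
  have := Set.ncard_le_ncard (s := {a, b, c}) (by
    rintro x (rfl | rfl | rfl) <;> assumption) s.toFinite
  omega

end Helpers


/-- A tree decomposition of a graph `G`. -/
structure TreeDecomp {V : Type} (G : SimpleGraph V) where
  ι : Type
  t : SimpleGraph ι
  t_tree : t.IsTree
  bag : ι → Set V
  bag_cover : ∀ v : V, ∃ i, v ∈ bag i
  bag_edge : ∀ ⦃u v : V⦄, G.Adj u v → ∃ i, u ∈ bag i ∧ v ∈ bag i
  bag_conn : ∀ v : V, (t.induce {i | v ∈ bag i}).Connected

/-- `G` has tree-width at most `k`: there is a tree decomposition all of whose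
bags have at most `k + 1` vertices. -/
def TreewidthLE {V : Type} (G : SimpleGraph V) (k : ℕ) : Prop :=
  ∃ D : TreeDecomp G, ∀ i, (D.bag i).ncard ≤ k + 1

/-- The tree-width of `G`. -/
noncomputable def treewidth {V : Type} (G : SimpleGraph V) : ℕ :=
  sInf {k | TreewidthLE G k}

/-- The graph obtained from `G` by contracting the vertex `v` (of degree at most 2)
to one of its neighbours: `v` is deleted and its (at most two) neighbours become
adjacent. -/
def contractVertex {V : Type} (G : SimpleGraph V) (v : V) :
    SimpleGraph {u : V // u ≠ v} where
  Adj a b := a ≠ b ∧ (G.Adj a b ∨ (G.Adj a v ∧ G.Adj b v))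
  symm := by
    constructor
    rintro a b ⟨hab, h | ⟨h1, h2⟩⟩
    · exact ⟨hab.symm, Or.inl h.symm⟩
    · exact ⟨hab.symm, Or.inr ⟨h2, h1⟩⟩
  loopless := by constructor; rintro a ⟨h, -⟩; exact h rfl

section OptTree
variable {ι : Type}

def optTree (t : SimpleGraph ι) (i₀ : ι) : SimpleGraph (Option ι) where
  Adj a b := match a, b with
    | some i, some j => t.Adj i j
    | some i, none => i = i₀
    | none, some j => j = i₀
    | none, none => False
  symm := by constructor; rintro (_|i) (_|j) h <;> simp_all <;> exact h.symm
  loopless := by constructor; rintro (_|i) h <;> simp_all <;> exact h.ne rfl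

def optTree_hom (t : SimpleGraph ι) (i₀ : ι) : t →g optTree t i₀ :=
  ⟨some, fun h => h⟩

lemma optTree_pullWalk {t : SimpleGraph ι} {i₀ : ι} :
    ∀ {a b : Option ι} (p : (optTree t i₀).Walk a b) (x y : ι), a = some x → b = some y →
      none ∉ p.support → ∃ q : t.Walk x y, q.edges.map (Sym2.map some) = p.edges ∧
        q.support.map some = p.support := by
  intro a b p
  induction p with
  | nil =>
    rintro x y rfl hy _
    obtain rfl : x = y := by injection hy
    exact ⟨.nil, rfl, rfl⟩
  | @cons u c b h p ih =>
    rintro x y rfl hy hn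
    simp only [SimpleGraph.Walk.support_cons, List.mem_cons, not_or] at hn
    obtain ⟨hne, hn⟩ := hn
    obtain (rfl|⟨z, rfl⟩) : c = none ∨ ∃ z, c = some z := by
      cases c with
      | none => exact Or.inl rfl
      | some z => exact Or.inr ⟨z, rfl⟩
    · exact absurd p.start_mem_support hn
    · have h' : t.Adj x z := h
      obtain ⟨q, hq1, hq2⟩ := ih z y rfl hy hn
      refine ⟨.cons h' q, ?_, ?_⟩
      · simp [SimpleGraph.Walk.edges_cons, hq1]
      · simp [SimpleGraph.Walk.support_cons, hq2]

lemma optTree_isTree {t : SimpleGraph ι} (ht : t.IsTree) (i₀ : ι) :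
    (optTree t i₀).IsTree := by
  constructor
  · have hreach : ∀ o : Option ι, (optTree t i₀).Reachable o (some i₀) := by
      rintro (_|i)
      · exact SimpleGraph.Adj.reachable (by show i₀ = i₀; rfl)
      · exact ((ht.isConnected.preconnected i i₀).map (optTree_hom t i₀))
    constructor
    · intro a b
      exact (hreach a).trans (hreach b).symm
  · intro o c hc
    haveI := Classical.decEq (Option ι)
    by_cases hn : none ∈ c.support
    · have hc' := hc.rotate hn
      set c' := c.rotate none hn with hc'def
      have hnil : ¬ c'.Nil := by
        intro h
        exact hc'.ne_nil (SimpleGraph.Walk.nil_iff_eq_nil.mp h)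
      obtain ⟨u, h, p, hce⟩ := SimpleGraph.Walk.not_nil_iff.mp hnil
      obtain rfl : u = some i₀ := by
        cases u with
        | none => exact absurd h ((optTree t i₀).loopless.irrefl none)
        | some j => exact congrArg some h
      have hpnil : ¬ p.Nil := by
        intro h
        have := h.eq
        simp at this
      have hrnil : ¬ p.reverse.Nil := by
        intro h
        rw [SimpleGraph.Walk.nil_iff_length_eq] at h hpnil
        simp [SimpleGraph.Walk.length_reverse] at h
        exact hpnil (SimpleGraph.Walk.nil_iff_length_eq.mp h)
      obtain ⟨w, hw, q, hq⟩ := SimpleGraph.Walk.not_nil_iff.mp hrnil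
      obtain rfl : w = some i₀ := by
        cases w with
        | none => exact absurd hw ((optTree t i₀).loopless.irrefl none)
        | some j => exact congrArg some hw
      have hmem : s(none, some i₀) ∈ p.edges := by
        rw [← List.mem_reverse, ← SimpleGraph.Walk.edges_reverse, hq]
        simp
      have hnodup := hc'.edges_nodup
      rw [hce, SimpleGraph.Walk.edges_cons] at hnodup
      exact (List.nodup_cons.mp hnodup).1 hmem
    · obtain (rfl|⟨x, rfl⟩) : o = none ∨ ∃ z, o = some z := by
        cases o with
        | none => exact Or.inl rfl
        | some z => exact Or.inr ⟨z, rfl⟩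
      · exact hn c.start_mem_support
      · obtain ⟨q, hq1, hq2⟩ := optTree_pullWalk c x x rfl rfl hn
        refine ht.IsAcyclic q ?_
        refine ⟨⟨⟨?_⟩, ?_⟩, ?_⟩
        · have := hc.edges_nodup
          rw [← hq1] at this
          exact this.of_map _
        · intro h
          have h3 := hc.three_le_length
          subst h
          rw [← SimpleGraph.Walk.length_edges, ← hq1] at h3
          simp at h3
        · have := hc.support_nodup
          rw [← hq2, ← List.map_tail] at this
          exact this.of_map _

end OptTree

section Bounds

variable {V : Type} [Fintype V]

lemma treewidthLE_contract {G : SimpleGraph V} {v : V}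
    (hdeg : (G.neighborSet v).ncard ≤ 2) {m : ℕ} (h : TreewidthLE G m) :
    TreewidthLE (contractVertex G v) m := by
  classical
  obtain ⟨D, hD⟩ := h
  by_cases hN : (G.neighborSet v).Nonempty
  · obtain ⟨a, haN⟩ := hN
    have hva : G.Adj v a := haN
    have hav : a ≠ v := hva.ne'
    set f : V → V := fun u => if u = v then a else u with hf
    have hfv : f v = a := by simp [hf]
    have hfnv : ∀ u : V, u ≠ v → f u = u := fun u hu => by simp [hf, hu]
    refine ⟨⟨D.ι, D.t, D.t_tree, fun i => {u : {u : V // u ≠ v} | ↑u ∈ f '' D.bag i},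
      ?_, ?_, ?_⟩, ?_⟩
    · intro u
      obtain ⟨i, hi⟩ := D.bag_cover ↑u
      exact ⟨i, ⟨↑u, hi, hfnv _ u.2⟩⟩
    · rintro x y ⟨hxy, hG | ⟨hx, hy⟩⟩
      · obtain ⟨i, h1, h2⟩ := D.bag_edge hG
        exact ⟨i, ⟨↑x, h1, hfnv _ x.2⟩, ⟨↑y, h2, hfnv _ y.2⟩⟩
      · have hxyne : (↑x : V) ≠ ↑y := fun hh => hxy (Subtype.ext hh)
        have hxN : (↑x : V) ∈ G.neighborSet v := hx.symm
        have hyN : (↑y : V) ∈ G.neighborSet v := hy.symm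
        have hcase : a = ↑x ∨ a = ↑y := by
          by_contra hcon
          push_neg at hcon
          have := ncard_three_le hcon.1 hcon.2 hxyne haN hxN hyN
          omega
        rcases hcase with hax | hay
        · obtain ⟨i, h1, h2⟩ := D.bag_edge hy
          exact ⟨i, ⟨v, h2, by rw [hfv, hax]⟩, ⟨↑y, h1, hfnv _ y.2⟩⟩
        · obtain ⟨i, h1, h2⟩ := D.bag_edge hx
          exact ⟨i, ⟨↑x, h1, hfnv _ x.2⟩, ⟨v, h2, by rw [hfv, hay]⟩⟩
    · intro u
      by_cases hua : (↑u : V) = a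
      · have hset : {i | (↑u : V) ∈ f '' D.bag i}
            = {i | a ∈ D.bag i} ∪ {i | v ∈ D.bag i} := by
          ext i
          simp only [Set.mem_setOf_eq, Set.mem_union]
          constructor
          · rintro ⟨w, hw, hfw⟩
            by_cases hwv : w = v
            · subst hwv; exact Or.inr hw
            · rw [hfnv _ hwv] at hfw
              rw [hfw, hua] at hw
              exact Or.inl hw
          · rintro (h | h)
            · exact ⟨a, h, by rw [hfnv _ hav, hua]⟩
            · exact ⟨v, h, by rw [hfv, hua]⟩
        show (D.t.induce {i | (↑u : V) ∈ f '' D.bag i}).Connected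
        rw [hset]
        obtain ⟨j, hj1, hj2⟩ := D.bag_edge hva.symm
        exact induce_union_connected (D.bag_conn a).preconnected (D.bag_conn v).preconnected ⟨j, hj1, hj2⟩
      · have hset : {i | (↑u : V) ∈ f '' D.bag i} = {i | (↑u : V) ∈ D.bag i} := by
          ext i
          simp only [Set.mem_setOf_eq]
          constructor
          · rintro ⟨w, hw, hfw⟩
            by_cases hwv : w = v
            · subst hwv; rw [hfv] at hfw; exact absurd hfw.symm hua
            · rw [hfnv _ hwv] at hfw; rwa [← hfw]
          · intro h
            exact ⟨↑u, h, hfnv _ u.2⟩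
        show (D.t.induce {i | (↑u : V) ∈ f '' D.bag i}).Connected
        rw [hset]
        exact D.bag_conn ↑u
    · intro i
      calc {u : {u : V // u ≠ v} | ↑u ∈ f '' D.bag i}.ncard
          ≤ (f '' D.bag i).ncard := ncard_subtype_le v _
        _ ≤ (D.bag i).ncard := Set.ncard_image_le (D.bag i).toFinite
        _ ≤ m + 1 := hD i
  · -- v isolated
    refine ⟨⟨D.ι, D.t, D.t_tree, fun i => {u : {u : V // u ≠ v} | ↑u ∈ D.bag i},
      ?_, ?_, ?_⟩, ?_⟩
    · intro u
      obtain ⟨i, hi⟩ := D.bag_cover ↑u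
      exact ⟨i, hi⟩
    · rintro x y ⟨hxy, hG | ⟨hx, hy⟩⟩
      · obtain ⟨i, h1, h2⟩ := D.bag_edge hG
        exact ⟨i, h1, h2⟩
      · exact absurd ⟨↑x, hx.symm⟩ hN
    · intro u
      exact D.bag_conn ↑u
    · intro i
      exact le_trans (ncard_subtype_le v _) (hD i)

lemma treewidthLE_of_contract {G : SimpleGraph V} {v : V}
    (hdeg : (G.neighborSet v).ncard ≤ 2) {m : ℕ} (hm : 2 ≤ m)
    (h : TreewidthLE (contractVertex G v) m) : TreewidthLE G m := by
  classical
  obtain ⟨D, hD⟩ := h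
  have key : ∀ u, u ∈ G.neighborSet v → u ≠ v := fun u hu => (hu : G.Adj v u).ne'
  have hι : Nonempty D.ι := D.t_tree.isConnected.nonempty
  have claim : ∃ i₀ : D.ι, ∀ u (hu : u ∈ G.neighborSet v),
      (⟨u, key u hu⟩ : {u : V // u ≠ v}) ∈ D.bag i₀ := by
    by_cases h1 : (G.neighborSet v).Nonempty
    · obtain ⟨a, ha⟩ := h1
      by_cases h2 : ∃ b ∈ G.neighborSet v, b ≠ a
      · obtain ⟨b, hb, hba⟩ := h2
        have hadj : (contractVertex G v).Adj ⟨a, key a ha⟩ ⟨b, key b hb⟩ :=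
          ⟨fun hh => hba (congrArg Subtype.val hh).symm,
            Or.inr ⟨(ha : G.Adj v a).symm, (hb : G.Adj v b).symm⟩⟩
        obtain ⟨i₀, hi1, hi2⟩ := D.bag_edge hadj
        refine ⟨i₀, fun u hu => ?_⟩
        have hab : u = a ∨ u = b := by
          by_contra hcon
          push_neg at hcon
          have := ncard_three_le hcon.1 hcon.2 (Ne.symm hba) hu ha hb
          omega
        rcases hab with rfl | rfl
        · exact hi1
        · exact hi2
      · push_neg at h2
        obtain ⟨i₀, hi₀⟩ := D.bag_cover ⟨a, key a ha⟩
        refine ⟨i₀, fun u hu => ?_⟩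
        obtain rfl : u = a := h2 u hu
        exact hi₀
    · exact ⟨Classical.arbitrary _, fun u hu => absurd ⟨u, hu⟩ h1⟩
  obtain ⟨i₀, hi₀⟩ := claim
  let bagF : Option D.ι → Set V := fun o => match o with
    | none => insert v (G.neighborSet v)
    | some i => Subtype.val '' D.bag i
  have hsomeMem : ∀ (i : D.ι) (u : V) (hu : u ≠ v),
      u ∈ bagF (some i) ↔ (⟨u, hu⟩ : {u : V // u ≠ v}) ∈ D.bag i := by
    intro i u hu
    constructor
    · rintro ⟨w, hw, hwu⟩
      have : w = ⟨u, hu⟩ := Subtype.ext hwu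
      rwa [this] at hw
    · intro h
      exact ⟨⟨u, hu⟩, h, rfl⟩
  refine ⟨⟨Option D.ι, optTree D.t i₀, optTree_isTree D.t_tree i₀, bagF, ?_, ?_, ?_⟩, ?_⟩
  · intro u
    by_cases hu : u = v
    · exact ⟨none, by simp [bagF, hu]⟩
    · obtain ⟨i, hi⟩ := D.bag_cover ⟨u, hu⟩
      exact ⟨some i, ⟨⟨u, hu⟩, hi, rfl⟩⟩
  · rintro u w huw
    by_cases hu : u = v
    · subst hu
      exact ⟨none, Set.mem_insert _ _, Set.mem_insert_of_mem _ huw⟩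
    · by_cases hw : w = v
      · subst hw
        exact ⟨none, Set.mem_insert_of_mem _ huw.symm, Set.mem_insert _ _⟩
      · have hadj : (contractVertex G v).Adj ⟨u, hu⟩ ⟨w, hw⟩ :=
          ⟨fun hh => huw.ne (congrArg Subtype.val hh), Or.inl huw⟩
        obtain ⟨i, h1, h2⟩ := D.bag_edge hadj
        exact ⟨some i, ⟨⟨u, hu⟩, h1, rfl⟩, ⟨⟨w, hw⟩, h2, rfl⟩⟩
  · intro u
    by_cases hu : u = v
    · subst hu
      have hset : {o : Option D.ι | u ∈ bagF o} = {none} := by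
        ext o
        cases o with
        | none => simp [bagF]
        | some i =>
          simp only [Set.mem_setOf_eq, Set.mem_singleton_iff]
          constructor
          · rintro ⟨w, hw, hwu⟩
            exact absurd hwu w.2
          · intro h
            exact absurd h (by simp)
      rw [hset]
      haveI : Nonempty ↑({none} : Set (Option D.ι)) := ⟨⟨none, rfl⟩⟩
      refine SimpleGraph.Connected.mk ?_
      rintro ⟨x, hx⟩ ⟨y, hy⟩
      obtain rfl : x = none := hx
      obtain rfl : y = none := hy
      exact SimpleGraph.Reachable.refl _
    · -- u ≠ v
      have hconnU := D.bag_conn ⟨u, hu⟩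
      by_cases huN : u ∈ G.neighborSet v
      · have hset : {o : Option D.ι | u ∈ bagF o}
            = insert none (some '' {i | (⟨u, hu⟩ : {u : V // u ≠ v}) ∈ D.bag i}) := by
          ext o
          cases o with
          | none =>
            simp only [Set.mem_setOf_eq, Set.mem_insert_iff, true_or, iff_true]
            exact Set.mem_insert_of_mem _ huN
          | some i =>
            simp only [Set.mem_setOf_eq, Set.mem_insert_iff, Set.mem_image,
              reduceCtorEq, false_or, hsomeMem i u hu]
            constructor
            · intro h; exact ⟨i, h, rfl⟩
            · rintro ⟨j, hj, hji⟩
              obtain rfl : j = i := by injection hji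
              exact hj
        rw [hset]
        have hmem₀ : (some i₀ : Option D.ι)
            ∈ insert none (some '' {i | (⟨u, hu⟩ : {u : V // u ≠ v}) ∈ D.bag i}) :=
          Set.mem_insert_of_mem _ ⟨i₀, hi₀ u huN, rfl⟩
        have hreach : ∀ x : {o : Option D.ι // o ∈ insert none
            (some '' {i | (⟨u, hu⟩ : {u : V // u ≠ v}) ∈ D.bag i})},
            ((optTree D.t i₀).induce _).Reachable x ⟨some i₀, hmem₀⟩ := by
          rintro ⟨o, ho⟩
          rcases ho with rfl | ⟨i, hi, rfl⟩
          · exact SimpleGraph.Adj.reachable (by show i₀ = i₀; rfl)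
          · exact reachable_induce_map (optTree_hom D.t i₀)
              (fun j hj => show (some j : Option D.ι) ∈ insert none
                  (some '' {i | (⟨u, hu⟩ : {u : V // u ≠ v}) ∈ D.bag i}) from
                Set.mem_insert_of_mem _ ⟨j, hj, rfl⟩) hi (hi₀ u huN)
              (hconnU.preconnected ⟨i, hi⟩ ⟨i₀, hi₀ u huN⟩)
        haveI : Nonempty ↑(insert none (some ''
            {i | (⟨u, hu⟩ : {u : V // u ≠ v}) ∈ D.bag i})) := ⟨⟨none, Set.mem_insert _ _⟩⟩
        exact SimpleGraph.Connected.mk fun x y => (hreach x).trans (hreach y).symm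
      · have hset : {o : Option D.ι | u ∈ bagF o}
            = some '' {i | (⟨u, hu⟩ : {u : V // u ≠ v}) ∈ D.bag i} := by
          ext o
          cases o with
          | none =>
            simp only [Set.mem_setOf_eq, Set.mem_image, reduceCtorEq, and_false,
              exists_false, iff_false]
            rintro (h | h)
            · exact hu h
            · exact huN h
          | some i =>
            simp only [Set.mem_setOf_eq, Set.mem_image, hsomeMem i u hu]
            constructor
            · intro h; exact ⟨i, h, rfl⟩
            · rintro ⟨j, hj, hji⟩
              obtain rfl : j = i := by injection hji
              exact hj
        rw [hset]
        obtain ⟨i₁, hi₁⟩ := D.bag_cover ⟨u, hu⟩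
        have hreach : ∀ x : {o : Option D.ι // o ∈ some ''
            {i | (⟨u, hu⟩ : {u : V // u ≠ v}) ∈ D.bag i}},
            ((optTree D.t i₀).induce _).Reachable x ⟨some i₁, ⟨i₁, hi₁, rfl⟩⟩ := by
          rintro ⟨o, ho⟩
          obtain ⟨i, hi, rfl⟩ := ho
          exact reachable_induce_map (optTree_hom D.t i₀)
            (fun j hj => show (some j : Option D.ι) ∈ some ''
                {i | (⟨u, hu⟩ : {u : V // u ≠ v}) ∈ D.bag i} from ⟨j, hj, rfl⟩) hi hi₁
            (hconnU.preconnected ⟨i, hi⟩ ⟨i₁, hi₁⟩)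
        haveI : Nonempty ↑(some '' {i | (⟨u, hu⟩ : {u : V // u ≠ v}) ∈ D.bag i}) :=
          ⟨⟨some i₁, ⟨i₁, hi₁, rfl⟩⟩⟩
        exact SimpleGraph.Connected.mk fun x y => (hreach x).trans (hreach y).symm
  · rintro (_ | i)
    · calc (insert v (G.neighborSet v)).ncard ≤ (G.neighborSet v).ncard + 1 :=
          Set.ncard_insert_le _ _
        _ ≤ m + 1 := by omega
    · show (Subtype.val '' D.bag i).ncard ≤ m + 1
      rw [Set.ncard_image_of_injective _ Subtype.val_injective]
      exact hD i

end Bounds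


/-- If `G` has tree-width `k ≥ 3` and `v` is a vertex of degree at most 2,
then the graph obtained from `G` by contracting `v` to one of its neighbours also has
tree-width `k`. -/
theorem treewidth_contract_low_degree_vertex {V : Type} [Fintype V]
    (G : SimpleGraph V) (v : V) (hdeg : (G.neighborSet v).ncard ≤ 2)
    (k : ℕ) (hk : 3 ≤ k) (htw : treewidth G = k) :
    treewidth (contractVertex G v) = k := by
  have hmono : ∀ {W : Type} (H : SimpleGraph W) {a b : ℕ}, a ≤ b →
      TreewidthLE H a → TreewidthLE H b := by
    rintro W H a b hab ⟨D, hD⟩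
    exact ⟨D, fun i => le_trans (hD i) (by omega)⟩
  have hGne : {n | TreewidthLE G n}.Nonempty := by
    by_contra h
    rw [Set.not_nonempty_iff_eq_empty] at h
    rw [treewidth, h, Nat.sInf_empty] at htw
    omega
  have hGk : TreewidthLE G k := by
    have h2 := Nat.sInf_mem hGne
    have h3 : sInf {n | TreewidthLE G n} = k := htw
    rwa [h3] at h2
  have hG'k : TreewidthLE (contractVertex G v) k := treewidthLE_contract hdeg hGk
  have h1 : treewidth (contractVertex G v) ≤ k := Nat.sInf_le hG'k
  by_contra hne
  have hlt : treewidth (contractVertex G v) < k := lt_of_le_of_ne h1 hne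
  have hmem : TreewidthLE (contractVertex G v) (treewidth (contractVertex G v)) :=
    Nat.sInf_mem (s := {n | TreewidthLE (contractVertex G v) n}) ⟨k, hG'k⟩
  have h2 : TreewidthLE (contractVertex G v) (k - 1) :=
    hmono _ (by omega : treewidth (contractVertex G v) ≤ k - 1) hmem
  have h3 : TreewidthLE G (k - 1) := treewidthLE_of_contract hdeg (by omega) h2
  have h4 : treewidth G ≤ k - 1 := Nat.sInf_le h3
  omega
end

section
/- For every integer n ≥ 3, the set of n points equally spaced on the unit circle admits a spanning tree (in fact a Hamiltonian path visiting the points in a sawtooth pattern) whose dilation is at most 1/sin(π/(2n)) ≤ 2n/π + π/(2n). -/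
open Real SimpleGraph

/-- The `i`-th of the points equally spaced on the unit circle in the Euclidean
plane, `p_i = (sin(2πi/n), cos(2πi/n))`. -/
noncomputable def circlePt (n : ℕ) (i : ℕ) : EuclideanSpace ℝ (Fin 2) :=
  (WithLp.equiv 2 (Fin 2 → ℝ)).symm
    ![sin (2 * π * i / n), cos (2 * π * i / n)]

/-- The Euclidean length of a walk in a geometric graph whose vertices are the points
`p_i`. -/
noncomputable def walkLength {n : ℕ} {T : SimpleGraph (Fin n)} {u v : Fin n}
    (w : T.Walk u v) : ℝ :=
  (w.darts.map fun d => dist (circlePt n d.fst) (circlePt n d.snd)).sum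

def sawIdx (n m : ℕ) : ℕ := if m % 2 = 0 then m / 2 else n - 1 - m / 2
def posIdx (n i : ℕ) : ℕ := if 2 * i < n then 2 * i else 2 * (n - 1 - i) + 1

def sawG (n : ℕ) : SimpleGraph (Fin n) where
  Adj u v := u ≠ v ∧ ((u : ℕ) + v = n - 1 ∨ (u : ℕ) + v = n)
  symm := by
    constructor
    rintro u v ⟨h1, h2⟩
    exact ⟨h1.symm, by omega⟩
  loopless := by constructor; rintro u ⟨h, -⟩; exact h rfl

lemma sawIdx_lt {n m : ℕ} (h0 : 0 < n) (hm : m < n) : sawIdx n m < n := by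
  unfold sawIdx; split <;> omega

def sawFin (n : ℕ) (h0 : 0 < n) (m : ℕ) : Fin n := ⟨sawIdx n m % n, Nat.mod_lt _ h0⟩

lemma sawFin_val {n m : ℕ} (h0 : 0 < n) (hm : m < n) :
    (sawFin n h0 m : ℕ) = sawIdx n m := Nat.mod_eq_of_lt (sawIdx_lt h0 hm)

lemma posIdx_lt {n i : ℕ} (hi : i < n) : posIdx n i < n := by
  unfold posIdx; split <;> omega

lemma sawIdx_posIdx {n i : ℕ} (hi : i < n) : sawIdx n (posIdx n i) = i := by
  unfold sawIdx posIdx; split <;> split <;> omega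

lemma sawFin_posIdx {n : ℕ} (h0 : 0 < n) (u : Fin n) :
    sawFin n h0 (posIdx n u) = u := by
  apply Fin.ext
  rw [sawFin_val h0 (posIdx_lt u.isLt), sawIdx_posIdx u.isLt]

lemma posIdx_inj {n : ℕ} (u v : Fin n) (h : posIdx n u = posIdx n v) : u = v := by
  apply Fin.ext
  rw [← sawIdx_posIdx u.isLt, ← sawIdx_posIdx v.isLt, h]

lemma sawG_adj_pos {n : ℕ} {u v : Fin n} (h : (sawG n).Adj u v) :
    posIdx n u + 1 = posIdx n v ∨ posIdx n v + 1 = posIdx n u := by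
  obtain ⟨hne, hsum⟩ := h
  have hne' : (u : ℕ) ≠ v := fun h => hne (Fin.ext h)
  have hu := u.isLt; have hv := v.isLt
  unfold posIdx; split <;> split <;> omega

lemma sawG_adj_succ {n : ℕ} (h0 : 0 < n) {m : ℕ} (hm : m + 1 < n) :
    (sawG n).Adj (sawFin n h0 m) (sawFin n h0 (m + 1)) := by
  constructor
  · intro h
    have := congrArg (Fin.val) h
    rw [sawFin_val h0 (by omega), sawFin_val h0 hm] at this
    unfold sawIdx at this; split at this <;> split at this <;> omega
  · rw [sawFin_val h0 (by omega), sawFin_val h0 hm]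
    unfold sawIdx; split <;> split <;> omega

def sawWalk (n : ℕ) (h0 : 0 < n) (a : ℕ) :
    (k : ℕ) → a + k < n → (sawG n).Walk (sawFin n h0 a) (sawFin n h0 (a + k))
  | 0, _ => Walk.nil
  | k + 1, h => (sawWalk n h0 a k (by omega)).concat (sawG_adj_succ h0 (by omega))

lemma walkLength_nil {n : ℕ} {T : SimpleGraph (Fin n)} {u : Fin n} :
    walkLength (Walk.nil : T.Walk u u) = 0 := by simp [walkLength]

lemma walkLength_concat {n : ℕ} {T : SimpleGraph (Fin n)} {u v w : Fin n}
    (p : T.Walk u v) (h : T.Adj v w) :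
    walkLength (p.concat h) = walkLength p + dist (circlePt n v) (circlePt n w) := by
  simp [walkLength, Walk.darts_concat]

lemma walkLength_reverse {n : ℕ} {T : SimpleGraph (Fin n)} {u v : Fin n}
    (p : T.Walk u v) : walkLength p.reverse = walkLength p := by
  simp only [walkLength, Walk.darts_reverse, List.map_reverse, List.sum_reverse,
    List.map_map]
  refine congrArg List.sum (List.map_congr_left fun d _ => ?_)
  exact dist_comm _ _

lemma dist_circlePt {n : ℕ} (hn : (n : ℝ) ≠ 0) (i j : ℕ) :
    dist (circlePt n i) (circlePt n j) = 2 * |sin (((i : ℝ) - j) * (π / n))| := by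
  have key : ∀ a b : ℝ, (sin a - sin b) ^ 2 + (cos a - cos b) ^ 2
      = (2 * |sin ((a - b) / 2)|) ^ 2 := by
    intro a b
    have h1 : sin a ^ 2 + cos a ^ 2 = 1 := sin_sq_add_cos_sq a
    have h2 : sin b ^ 2 + cos b ^ 2 = 1 := sin_sq_add_cos_sq b
    have h3 : cos (a - b) = cos a * cos b + sin a * sin b := cos_sub a b
    have h4 : sin ((a - b) / 2) ^ 2 = 1 / 2 - cos (2 * ((a - b) / 2)) / 2 := sin_sq_eq_half_sub _
    rw [show 2 * ((a - b) / 2) = a - b by ring] at h4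
    have h5 : |sin ((a - b) / 2)| ^ 2 = sin ((a - b) / 2) ^ 2 := sq_abs _
    nlinarith
  rw [circlePt, circlePt, EuclideanSpace.dist_eq]
  simp only [WithLp.equiv_symm_apply, PiLp.toLp_apply, Fin.sum_univ_two, Matrix.cons_val_zero,
    Matrix.cons_val_one, Matrix.head_cons, Real.dist_eq, sq_abs]
  rw [key]
  rw [Real.sqrt_sq (by positivity)]
  congr 2
  field_simp

lemma sin_pos_of_frac {n : ℕ} (hn : 3 ≤ n) {x : ℝ} (h1 : 0 < x) (h2 : x < n) :
    0 < sin (x * (π / n)) := by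
  have hn' : (0:ℝ) < n := by positivity
  apply sin_pos_of_pos_of_lt_pi
  · positivity
  · have h3 : x * (π / n) < n * (π / n) :=
      mul_lt_mul_of_pos_right h2 (by positivity)
    have h4 : (n : ℝ) * (π / n) = π := by field_simp
    linarith

lemma edge_length {n : ℕ} (hn : 3 ≤ n) {m : ℕ} (hm : m + 1 < n) :
    dist (circlePt n (sawIdx n m)) (circlePt n (sawIdx n (m + 1)))
      = 2 * sin (((n : ℝ) - 1 - m) * (π / n)) := by
  have h0 : (0:ℕ) < n := by omega
  have hn' : (n : ℝ) ≠ 0 := by positivity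
  rw [dist_circlePt hn']
  have hpos : 0 < sin (((n : ℝ) - 1 - m) * (π / n)) := by
    apply sin_pos_of_frac hn
    · have hmn : ((m : ℝ) + 1) < n := by exact_mod_cast hm
      linarith
    · have : (0:ℝ) ≤ m := Nat.cast_nonneg m
      linarith
  rcases Nat.even_or_odd m with ⟨j, rfl⟩ | ⟨j, rfl⟩
  · have e1 : sawIdx n (j + j) = j := by unfold sawIdx; split <;> omega
    have e2 : sawIdx n (j + j + 1) = n - 1 - j := by unfold sawIdx; split <;> omega
    rw [e1, e2]
    have hc : ((n - 1 - j : ℕ) : ℝ) = (n : ℝ) - 1 - j := by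
      have : j + 1 ≤ n - 1 := by omega
      push_cast [Nat.cast_sub (by omega : j ≤ n - 1), Nat.cast_sub (by omega : 1 ≤ n)]
      ring
    rw [hc]
    rw [show ((j:ℝ) - ((n:ℝ) - 1 - j)) * (π / n) = -(((n : ℝ) - 1 - (j + j)) * (π / n)) by push_cast; ring]
    rw [sin_neg, abs_neg, abs_of_pos (by exact_mod_cast hpos)]
    congr 2
    push_cast; ring
  · have e1 : sawIdx n (2 * j + 1) = n - 1 - j := by unfold sawIdx; split <;> omega
    have e2 : sawIdx n (2 * j + 1 + 1) = j + 1 := by unfold sawIdx; split <;> omega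
    rw [e1, e2]
    have hc : ((n - 1 - j : ℕ) : ℝ) = (n : ℝ) - 1 - j := by
      push_cast [Nat.cast_sub (by omega : j ≤ n - 1), Nat.cast_sub (by omega : 1 ≤ n)]
      ring
    rw [hc]
    rw [show (((n:ℝ) - 1 - j) - ((j:ℕ) + 1 : ℕ)) * (π / n) = ((n : ℝ) - 1 - (2 * j + 1)) * (π / n) by push_cast; ring]
    rw [abs_of_pos (by exact_mod_cast hpos)]
    congr 2
    push_cast; ring

lemma walkLength_sawWalk {n : ℕ} (hn : 3 ≤ n) (h0 : 0 < n) (a : ℕ) :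
    ∀ (k : ℕ) (h : a + k < n),
      walkLength (sawWalk n h0 a k h) * sin (π / (2 * n))
        = cos (((n : ℝ) - a - k - 1/2) * (π / n)) - cos (((n : ℝ) - a - 1/2) * (π / n))
  | 0, h => by simp [sawWalk, walkLength_nil]
  | k + 1, h => by
    have hrec := walkLength_sawWalk hn h0 a k (by omega)
    rw [sawWalk, walkLength_concat, add_mul, hrec]
    rw [show a + (k + 1) = a + k + 1 by omega]
    rw [sawFin_val h0 (by omega), sawFin_val h0 (by omega)]
    rw [edge_length hn (by omega : (a + k) + 1 < n)]
    have harg : π / (2 * (n : ℝ)) = (π / n) / 2 := by ring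
    have hkey : cos (((n : ℝ) - a - (k+1) - 1/2) * (π / n))
        - cos (((n : ℝ) - a - k - 1/2) * (π / n))
        = 2 * sin (((n : ℝ) - 1 - (a + k)) * (π / n)) * sin ((π / n) / 2) := by
      rw [cos_sub_cos]
      rw [show ((((n:ℝ) - a - (k+1) - 1/2) * (π / n)) + (((n:ℝ) - a - k - 1/2) * (π / n))) / 2
          = ((n : ℝ) - 1 - (a + k)) * (π / n) by push_cast; ring]
      rw [show ((((n:ℝ) - a - (k+1) - 1/2) * (π / n)) - (((n:ℝ) - a - k - 1/2) * (π / n))) / 2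
          = -((π / n) / 2) by push_cast; ring]
      rw [sin_neg]
      ring
    rw [harg]
    push_cast
    push_cast at hkey
    linarith

lemma key_ineq {n : ℕ} (hn : 3 ≤ n) {a b : ℕ} (hab : a < b) (hb : b < n) :
    cos (((n:ℝ) - b - 1/2) * (π / n)) - cos (((n:ℝ) - a - 1/2) * (π / n))
      ≤ dist (circlePt n (sawIdx n a)) (circlePt n (sawIdx n b)) := by
  have hn' : (n : ℝ) ≠ 0 := by positivity
  have hcb : (b : ℝ) < n := by exact_mod_cast hb
  have hca : (a : ℝ) + 1 ≤ b := by exact_mod_cast hab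
  have ha0 : (0:ℝ) ≤ a := Nat.cast_nonneg a
  set xA : ℝ := (n:ℝ) - ((a:ℝ) + b)/2 - 1/2 with hxA
  set xB : ℝ := ((b:ℝ) - a)/2 with hxB
  have hΔ : cos (((n:ℝ) - b - 1/2) * (π / n)) - cos (((n:ℝ) - a - 1/2) * (π / n))
      = 2 * sin (xA * (π / n)) * sin (xB * (π / n)) := by
    rw [cos_sub_cos]
    rw [show ((((n:ℝ) - b - 1/2) * (π / n)) + (((n:ℝ) - a - 1/2) * (π / n))) / 2
        = xA * (π / n) by rw [hxA]; ring]
    rw [show ((((n:ℝ) - b - 1/2) * (π / n)) - (((n:ℝ) - a - 1/2) * (π / n))) / 2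
        = -(xB * (π / n)) by rw [hxB]; ring]
    rw [sin_neg]; ring
  have hsA : 0 < sin (xA * (π / n)) := by
    apply sin_pos_of_frac hn
    · rw [hxA]; linarith
    · rw [hxA]; linarith
  have hsB : 0 < sin (xB * (π / n)) := by
    apply sin_pos_of_frac hn
    · rw [hxB]; linarith
    · rw [hxB]; linarith
  have hA1 : sin (xA * (π / n)) ≤ 1 := sin_le_one _
  have hB1 : sin (xB * (π / n)) ≤ 1 := sin_le_one _
  rw [hΔ, dist_circlePt hn']
  rcases Nat.even_or_odd a with ⟨i, rfl⟩ | ⟨i, rfl⟩ <;>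
    rcases Nat.even_or_odd b with ⟨j, rfl⟩ | ⟨j, rfl⟩
  · -- both even
    have e1 : sawIdx n (i + i) = i := by unfold sawIdx; split <;> omega
    have e2 : sawIdx n (j + j) = j := by unfold sawIdx; split <;> omega
    rw [e1, e2]
    rw [show ((i:ℝ) - j) * (π / n) = -(xB * (π / n)) by rw [hxB]; push_cast; ring]
    rw [sin_neg, abs_neg, abs_of_pos hsB]
    nlinarith
  · -- a even, b odd
    have e1 : sawIdx n (i + i) = i := by unfold sawIdx; split <;> omega
    have e2 : sawIdx n (2 * j + 1) = n - 1 - j := by unfold sawIdx; split <;> omega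
    rw [e1, e2]
    have hc : ((n - 1 - j : ℕ) : ℝ) = (n : ℝ) - 1 - j := by
      push_cast [Nat.cast_sub (by omega : j ≤ n - 1), Nat.cast_sub (by omega : 1 ≤ n)]
      ring
    rw [hc]
    rw [show ((i:ℝ) - ((n:ℝ) - 1 - j)) * (π / n) = -(xA * (π / n)) by
      rw [hxA]; push_cast; ring]
    rw [sin_neg, abs_neg, abs_of_pos hsA]
    nlinarith
  · -- a odd, b even
    have e1 : sawIdx n (2 * i + 1) = n - 1 - i := by unfold sawIdx; split <;> omega
    have e2 : sawIdx n (j + j) = j := by unfold sawIdx; split <;> omega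
    rw [e1, e2]
    have hc : ((n - 1 - i : ℕ) : ℝ) = (n : ℝ) - 1 - i := by
      push_cast [Nat.cast_sub (by omega : i ≤ n - 1), Nat.cast_sub (by omega : 1 ≤ n)]
      ring
    rw [hc]
    rw [show (((n:ℝ) - 1 - i) - j) * (π / n) = xA * (π / n) by
      rw [hxA]; push_cast; ring]
    rw [abs_of_pos hsA]
    nlinarith
  · -- both odd
    have e1 : sawIdx n (2 * i + 1) = n - 1 - i := by unfold sawIdx; split <;> omega
    have e2 : sawIdx n (2 * j + 1) = n - 1 - j := by unfold sawIdx; split <;> omega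
    rw [e1, e2]
    have hc1 : ((n - 1 - i : ℕ) : ℝ) = (n : ℝ) - 1 - i := by
      push_cast [Nat.cast_sub (by omega : i ≤ n - 1), Nat.cast_sub (by omega : 1 ≤ n)]
      ring
    have hc2 : ((n - 1 - j : ℕ) : ℝ) = (n : ℝ) - 1 - j := by
      push_cast [Nat.cast_sub (by omega : j ≤ n - 1), Nat.cast_sub (by omega : 1 ≤ n)]
      ring
    rw [hc1, hc2]
    rw [show (((n:ℝ) - 1 - i) - ((n:ℝ) - 1 - j)) * (π / n) = xB * (π / n) by
      rw [hxB]; push_cast; ring]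
    rw [abs_of_pos hsB]
    nlinarith


lemma isAcyclic_of_linear {V : Type*} [DecidableEq V] {G : SimpleGraph V} (f : V → ℕ)
    (hinj : Function.Injective f)
    (hadj : ∀ u v, G.Adj u v → f u + 1 = f v ∨ f v + 1 = f u) : G.IsAcyclic := by
  intro v c hc
  obtain ⟨u, hu, hmax⟩ : ∃ u ∈ c.support, ∀ y ∈ c.support, f y ≤ f u := by
    obtain ⟨u, hu, hmax⟩ := Finset.exists_max_image c.support.toFinset f
      ⟨v, List.mem_toFinset.mpr c.start_mem_support⟩
    exact ⟨u, List.mem_toFinset.mp hu, fun y hy => hmax y (List.mem_toFinset.mpr hy)⟩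
  have hcyc : (c.rotate u hu).IsCycle := hc.rotate hu
  have hsub : ∀ y, y ∈ (c.rotate u hu).support → y ∈ c.support := by
    intro y hy
    rw [Walk.support_eq_cons, List.mem_cons] at hy
    rcases hy with hy | hy
    · subst hy; exact hu
    · have := (Walk.support_rotate c u hu).mem_iff.mp hy
      rw [Walk.support_eq_cons c]
      exact List.mem_cons_of_mem _ this
  set c' := c.rotate u hu with hc'def
  clear_value c'
  obtain ⟨w, h1, q, rfl⟩ := Walk.not_nil_iff.mp hcyc.not_nil
  have hlen : 3 ≤ q.length + 1 := by simpa using hcyc.three_le_length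
  have hqnil : ¬ q.reverse.Nil := by
    rw [Walk.not_nil_iff_lt_length, Walk.length_reverse]; omega
  obtain ⟨x, h2, q2, hq2⟩ := Walk.not_nil_iff.mp hqnil
  -- w and x are in the support
  have hw : w ∈ c.support := hsub w (by simp)
  have hx : x ∈ c.support := by
    apply hsub
    have : x ∈ q.reverse.support := by rw [hq2]; simp
    rw [Walk.support_reverse] at this
    simp [List.mem_reverse.mp this]
  have hfw : f w + 1 = f u := by
    rcases hadj u w h1 with h | h
    · have := hmax w hw; omega
    · exact h
  have hfx : f x + 1 = f u := by
    rcases hadj u x h2 with h | h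
    · have := hmax x hx; omega
    · exact h
  have hxw : x = w := hinj (by omega)
  have hmem : s(u, w) ∈ q.edges := by
    have : s(u, x) ∈ q.reverse.edges := by rw [hq2]; simp
    rw [Walk.edges_reverse, List.mem_reverse] at this
    rwa [hxw] at this
  exact ((Walk.cons_isCycle_iff q h1).mp hcyc).2 hmem

lemma walkLength_copy {n : ℕ} {T : SimpleGraph (Fin n)} {u v u' v' : Fin n}
    (w : T.Walk u v) (h : u = u') (h' : v = v') :
    walkLength (w.copy h h') = walkLength w := by
  subst h; subst h'; rw [Walk.copy_rfl_rfl]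

lemma sin_half_pos {n : ℕ} (hn : 3 ≤ n) : 0 < sin (π / (2 * (n:ℝ))) := by
  have h2n : (1:ℝ) < 2 * n := by
    have : (3:ℝ) ≤ n := by exact_mod_cast hn
    linarith
  apply sin_pos_of_pos_of_lt_pi
  · have : (0:ℝ) < 2 * n := by linarith
    positivity
  · exact div_lt_self pi_pos h2n

lemma pair_bound {n : ℕ} (hn : 3 ≤ n) (h0 : 0 < n) {a b : ℕ} (hab : a < b) (hb : b < n) :
    ∃ w : (sawG n).Walk (sawFin n h0 a) (sawFin n h0 b),
      walkLength w ≤ (1 / sin (π / (2 * (n:ℝ)))) *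
        dist (circlePt n (sawFin n h0 a : ℕ)) (circlePt n (sawFin n h0 b : ℕ)) := by
  have hs := sin_half_pos hn
  have hk : a + (b - a) < n := by omega
  refine ⟨(sawWalk n h0 a (b - a) hk).copy rfl (by rw [show a + (b - a) = b by omega]), ?_⟩
  rw [walkLength_copy]
  have hwl := walkLength_sawWalk hn h0 a (b - a) hk
  have hkc : ((b - a : ℕ) : ℝ) = (b : ℝ) - a := by
    push_cast [Nat.cast_sub hab.le]; ring
  rw [hkc] at hwl
  rw [show (n:ℝ) - a - ((b:ℝ) - a) - 1/2 = (n:ℝ) - b - 1/2 by ring] at hwl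
  have hkey := key_ineq hn hab hb
  rw [sawFin_val h0 (by omega), sawFin_val h0 hb]
  rw [one_div, inv_mul_eq_div, le_div_iff₀ hs]
  calc walkLength (sawWalk n h0 a (b - a) hk) * sin (π / (2 * (n:ℝ)))
      = cos (((n:ℝ) - b - 1/2) * (π / n)) - cos (((n:ℝ) - a - 1/2) * (π / n)) := hwl
    _ ≤ dist (circlePt n (sawIdx n a)) (circlePt n (sawIdx n b)) := hkey


/-- For every `n ≥ 3`, the `n` points equally spaced on the unit circle
admit a geometric spanning tree whose dilation is at most
`1/sin(π/(2n)) ≤ 2n/π + π/(2n)`. -/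
theorem circle_points_tree_spanner (n : ℕ) (hn : 3 ≤ n) :
    (∃ T : SimpleGraph (Fin n), T.IsTree ∧
      ∀ u v : Fin n, u ≠ v → ∃ w : T.Walk u v,
        walkLength w ≤ (1 / sin (π / (2 * n))) * dist (circlePt n u) (circlePt n v)) ∧
    1 / sin (π / (2 * n)) ≤ 2 * n / π + π / (2 * n) := by
  have h0 : 0 < n := by omega
  constructor
  · refine ⟨sawG n, ⟨?_, ?_⟩, ?_⟩
    · -- connected
      rw [connected_iff]
      refine ⟨?_, ⟨⟨0, h0⟩⟩⟩
      intro u v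
      have h1 : 0 + posIdx n (u : ℕ) < n := by
        rw [Nat.zero_add]; exact posIdx_lt u.isLt
      have h2 : 0 + posIdx n (v : ℕ) < n := by
        rw [Nat.zero_add]; exact posIdx_lt v.isLt
      have e1 : sawFin n h0 (0 + posIdx n (u : ℕ)) = u := by
        rw [Nat.zero_add]; exact sawFin_posIdx h0 u
      have e2 : sawFin n h0 (0 + posIdx n (v : ℕ)) = v := by
        rw [Nat.zero_add]; exact sawFin_posIdx h0 v
      exact ⟨((sawWalk n h0 0 (posIdx n (u : ℕ)) h1).copy rfl e1).reverse.append
        ((sawWalk n h0 0 (posIdx n (v : ℕ)) h2).copy rfl e2)⟩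
    · -- acyclic
      exact isAcyclic_of_linear (fun u : Fin n => posIdx n (u : ℕ))
        (fun u v h => posIdx_inj u v h) (fun u v h => sawG_adj_pos h)
    · -- dilation bound
      intro u v huv
      rcases lt_trichotomy (posIdx n (u : ℕ)) (posIdx n (v : ℕ)) with h | h | h
      · obtain ⟨w, hw⟩ := pair_bound hn h0 h (posIdx_lt v.isLt)
        have e1 : sawFin n h0 (posIdx n (u : ℕ)) = u := sawFin_posIdx h0 u
        have e2 : sawFin n h0 (posIdx n (v : ℕ)) = v := sawFin_posIdx h0 v
        refine ⟨w.copy e1 e2, ?_⟩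
        rw [walkLength_copy]
        rw [congrArg Fin.val e1, congrArg Fin.val e2] at hw
        exact hw
      · exact absurd (posIdx_inj u v h) huv
      · obtain ⟨w, hw⟩ := pair_bound hn h0 h (posIdx_lt u.isLt)
        have e1 : sawFin n h0 (posIdx n (v : ℕ)) = v := sawFin_posIdx h0 v
        have e2 : sawFin n h0 (posIdx n (u : ℕ)) = u := sawFin_posIdx h0 u
        refine ⟨(w.copy e1 e2).reverse, ?_⟩
        rw [walkLength_reverse, walkLength_copy]
        rw [congrArg Fin.val e1, congrArg Fin.val e2] at hw
        rw [dist_comm (circlePt n (u : ℕ)) (circlePt n (v : ℕ))]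
        exact hw
  · -- numeric bound
    have hs := sin_half_pos hn
    set x : ℝ := π / (2 * n) with hx
    have hn3 : (3:ℝ) ≤ n := by exact_mod_cast hn
    have hx0 : 0 < x := by rw [hx]; positivity
    have hx1 : x ≤ 1 := by
      rw [hx]
      have h6 : (6:ℝ) ≤ 2 * n := by linarith
      calc π / (2 * (n:ℝ)) ≤ π / 6 :=
            div_le_div_of_nonneg_left pi_pos.le (by norm_num) h6
        _ ≤ 4 / 6 := by linarith [pi_le_four]
        _ ≤ 1 := by norm_num
    have hsin := sin_gt_sub_cube hx0
    have hrhs : 2 * (n:ℝ) / π + π / (2 * n) = 1 / x + x := by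
      rw [hx, one_div_div]
    rw [hrhs]
    have h1x : 1 / x + x = (1 + x^2) / x := by field_simp
    rw [h1x, div_le_div_iff₀ hs hx0]
    have h5 : x ^ 5 ≤ x ^ 3 := pow_le_pow_of_le_one hx0.le hx1 (by norm_num)
    have hmul := mul_lt_mul_of_pos_left hsin (show (0:ℝ) < 1 + x ^ 2 by positivity)
    nlinarith [hmul, h5]
end
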